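/- Let F be a field of characteristic 2 with a valuation ν : F^× → Γ to a totally ordered abelian group Γ. Fix k ≥ 1 and β₁,…,β_k ∈ F^× such that ν(β₁) < 0 and the images of ν(β₁),…,ν(β_k) in Γ/2Γ are linearly independent over 𝔽₂. Let φ = ⟪β_k,…,β₂,β₁]] be the quadratic k-fold Pfister form on the 2^k-dimensional space W with its monomial basis {e_𝐢 : 𝐢 ∈ {0,1}^k}. Then: (1) for every nonzero w = Σ_𝐢 w_𝐢 e_𝐢 ∈ W, ν(φ(w)) = ν(φ(w_𝐢 e_𝐢)) for some index 𝐢 with w_𝐢 ≠ 0; (2) φ is anisotropic; (3) the set of classes modulo 2Γ of the values ν(φ(w)) (w ranging over vectors with φ(w) ≠ 0) is exactly the 𝔽₂-subspace of Γ/2Γ spanned by ν(β₁),…,ν(β_k). -/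

import Mathlib

/-- The quadratic `(m+1)`-fold Pfister form `⟪β_{m+1},…,β₂,β₁]]` on the
`2^(m+1)`-dimensional space `W` with monomial basis indexed by `Fin (m+1) → Bool`,
defined inductively: `φ₁(w₀e₀ + w₁e₁) = w₀² + w₀w₁ + β₁w₁²` and
`φ_{j+1}(e₀ ⊗ w₀ + e₁ ⊗ w₁) = φ_j(w₀) + β_{j+1}·φ_j(w₁)`.
Here `β i` is `β_{i+1}`, and a vector is a coefficient function on the monomial basis. -/
def pfisterFun {F : Type*} [Field F] :
    (m : ℕ) → (Fin (m + 1) → F) → ((Fin (m + 1) → Bool) → F) → F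
  | 0, β, w =>
      (w fun _ => false) ^ 2 + (w fun _ => false) * (w fun _ => true) +
        β 0 * (w fun _ => true) ^ 2
  | (j + 1), β, w =>
      pfisterFun j (fun i => β i.castSucc) (fun t => w (Fin.snoc t false)) +
        β (Fin.last (j + 1)) * pfisterFun j (fun i => β i.castSucc) (fun t => w (Fin.snoc t true))

/-- The subgroup `2Γ` of a totally ordered abelian group `Γ`. -/
def twoSubgroup (Γ : Type*) [AddCommGroup Γ] : AddSubgroup Γ :=
  AddSubgroup.closure {g : Γ | ∃ h : Γ, g = h + h}

section Aux

variable {F : Type*} [Field F] [CharP F 2]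
variable {Γ : Type*} [AddCommGroup Γ] [LinearOrder Γ] [IsOrderedAddMonoid Γ]
variable {ν : F → Γ}

lemma aux_two_tor (x : Γ) : QuotientAddGroup.mk' (twoSubgroup Γ) (x + x) = 0 := by
  rw [QuotientAddGroup.mk'_apply]
  exact (QuotientAddGroup.eq_zero_iff _).mpr (AddSubgroup.subset_closure ⟨x, rfl⟩)

lemma aux_nu_one (hmul : ∀ x y : F, x ≠ 0 → y ≠ 0 → ν (x * y) = ν x + ν y) : ν 1 = 0 := by
  have h := hmul 1 1 one_ne_zero one_ne_zero
  rw [one_mul] at h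
  exact (left_eq_add.mp h)

lemma aux_add_lt
    (hadd : ∀ x y : F, x ≠ 0 → y ≠ 0 → x + y ≠ 0 → min (ν x) (ν y) ≤ ν (x + y))
    {x y : F} (hx : x ≠ 0) (hy : y ≠ 0) (h : ν x < ν y) :
    x + y ≠ 0 ∧ ν (x + y) = ν x := by
  have hne : x + y ≠ 0 := by
    intro h0
    have hxy : x = y := by
      have := eq_neg_of_add_eq_zero_left h0
      rwa [CharTwo.neg_eq] at this
    rw [hxy] at h; exact lt_irrefl _ h
  refine ⟨hne, ?_⟩
  have h1 : ν x ≤ ν (x + y) := by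
    have := hadd x y hx hy hne
    rwa [min_eq_left h.le] at this
  have hxyy : (x + y) + y = x := by rw [add_assoc, CharTwo.add_self_eq_zero, add_zero]
  have h2 : min (ν (x + y)) (ν y) ≤ ν x := by
    have := hadd (x + y) y hne hy (by rw [hxyy]; exact hx)
    rwa [hxyy] at this
  refine le_antisymm ?_ h1
  by_contra hc
  push_neg at hc
  exact absurd h2 (not_le.mpr (lt_min hc h))

lemma aux_add_ne
    (hadd : ∀ x y : F, x ≠ 0 → y ≠ 0 → x + y ≠ 0 → min (ν x) (ν y) ≤ ν (x + y))
    {x y : F} (hx : x ≠ 0) (hy : y ≠ 0) (h : ν x ≠ ν y) :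
    x + y ≠ 0 ∧ ν (x + y) = min (ν x) (ν y) := by
  rcases h.lt_or_gt with h' | h'
  · obtain ⟨h1, h2⟩ := aux_add_lt hadd hx hy h'
    exact ⟨h1, by rw [h2, min_eq_left h'.le]⟩
  · obtain ⟨h1, h2⟩ := aux_add_lt hadd hy hx h'
    rw [add_comm] at h1 h2
    exact ⟨h1, by rw [h2, min_eq_right h'.le]⟩

lemma pfister_eval_zero (m : ℕ) (β : Fin (m + 1) → F) (w : (Fin (m + 1) → Bool) → F)
    (hw : ∀ t, w t = 0) : pfisterFun m β w = 0 := by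
  induction m with
  | zero => simp [pfisterFun, hw]
  | succ n ih =>
    simp only [pfisterFun]
    rw [ih _ _ (fun t => hw _), ih _ _ (fun t => hw _)]
    ring

lemma aux_prod_nu (hmul : ∀ x y : F, x ≠ 0 → y ≠ 0 → ν (x * y) = ν x + ν y)
    {ι : Type*} (s : Finset ι) (g : ι → F) (hg : ∀ j ∈ s, g j ≠ 0) :
    (∏ j ∈ s, g j) ≠ 0 ∧ ν (∏ j ∈ s, g j) = ∑ j ∈ s, ν (g j) := by
  classical
  induction s using Finset.induction_on with
  | empty => simpa using aux_nu_one hmul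
  | @insert a s ha ih =>
    obtain ⟨h1, h2⟩ := ih (fun j hj => hg j (Finset.mem_insert_of_mem hj))
    have hga := hg a (Finset.mem_insert_self a s)
    rw [Finset.prod_insert ha, Finset.sum_insert ha, hmul _ _ hga h1, h2]
    exact ⟨mul_ne_zero hga h1, rfl⟩

lemma pfister_monomial (m : ℕ) (β : Fin (m + 1) → F) (i : Fin (m + 1) → Bool) (c : F) :
    pfisterFun m β (fun j => if j = i then c else 0) =
      c ^ 2 * ∏ j, (if i j = true then β j else 1) := by
  induction m with
  | zero =>
    have hprod : ∏ j : Fin 1, (if i j = true then β j else 1) = if i 0 = true then β 0 else 1 := by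
      rw [Fin.prod_univ_one]
    cases h : i 0 with
    | false =>
      have hcf : (fun _ : Fin 1 => false) = i := funext fun j => by
        rw [Subsingleton.elim j 0, h]
      have hct : (fun _ : Fin 1 => true) ≠ i := by
        intro hc
        have := congrFun hc 0
        rw [h] at this
        exact Bool.noConfusion this
      simp only [pfisterFun, if_pos hcf, if_neg hct, hprod, h]
      norm_num
    | true =>
      have hct : (fun _ : Fin 1 => true) = i := funext fun j => by
        rw [Subsingleton.elim j 0, h]
      have hcf : (fun _ : Fin 1 => false) ≠ i := by
        intro hc
        have := congrFun hc 0
        rw [h] at this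
        exact Bool.noConfusion this
      simp only [pfisterFun, if_pos hct, if_neg hcf, hprod, h]
      simp only [if_pos trivial]
      ring
  | succ n ih =>
    have hs : ∏ j : Fin (n + 2), (if i j = true then β j else 1) =
        (∏ j : Fin (n + 1), (if Fin.init i j = true then β j.castSucc else 1)) *
          (if i (Fin.last (n + 1)) = true then β (Fin.last (n + 1)) else 1) := by
      rw [Fin.prod_univ_castSucc]
      rfl
    cases hl : i (Fin.last (n + 1)) with
    | false =>
      have hsn : Fin.snoc (Fin.init i) false = i := by
        conv_rhs => rw [← Fin.snoc_init_self i]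
        rw [hl]
      have h0 : (fun t => if Fin.snoc t false = i then c else 0) =
          fun t => if t = Fin.init i then c else 0 := by
        funext t
        by_cases ht : t = Fin.init i
        · rw [if_pos ht, if_pos (by rw [ht, hsn])]
        · rw [if_neg ht, if_neg]
          intro hc
          apply ht
          funext j
          have := congrFun (hc.trans hsn.symm) j.castSucc
          simpa [Fin.snoc_castSucc] using this
      have h1 : ∀ t : Fin (n + 1) → Bool, (if Fin.snoc t true = i then c else 0) = (0 : F) := by
        intro t
        rw [if_neg]
        intro hc
        have := congrFun hc (Fin.last (n + 1))
        rw [Fin.snoc_last, hl] at this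
        exact Bool.noConfusion this
      simp only [pfisterFun]
      rw [show (fun t => (fun j => if j = i then c else 0) (Fin.snoc t false)) =
          (fun t => if t = Fin.init i then c else 0) from h0]
      rw [pfister_eval_zero n _ _ h1, ih (fun t => β t.castSucc) (Fin.init i)]
      rw [hs, hl]
      simp only [Bool.false_eq_true, if_false, if_pos trivial, if_true, mul_one]
      ring
    | true =>
      have hsn : Fin.snoc (Fin.init i) true = i := by
        conv_rhs => rw [← Fin.snoc_init_self i]
        rw [hl]
      have h0 : (fun t => if Fin.snoc t true = i then c else 0) =
          fun t => if t = Fin.init i then c else 0 := by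
        funext t
        by_cases ht : t = Fin.init i
        · rw [if_pos ht, if_pos (by rw [ht, hsn])]
        · rw [if_neg ht, if_neg]
          intro hc
          apply ht
          funext j
          have := congrFun (hc.trans hsn.symm) j.castSucc
          simpa [Fin.snoc_castSucc] using this
      have h1 : ∀ t : Fin (n + 1) → Bool, (if Fin.snoc t false = i then c else 0) = (0 : F) := by
        intro t
        rw [if_neg]
        intro hc
        have := congrFun hc (Fin.last (n + 1))
        rw [Fin.snoc_last, hl] at this
        exact Bool.noConfusion this
      simp only [pfisterFun]
      rw [show (fun t => (fun j => if j = i then c else 0) (Fin.snoc t true)) =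
          (fun t => if t = Fin.init i then c else 0) from h0]
      rw [pfister_eval_zero n _ _ h1, ih (fun t => β t.castSucc) (Fin.init i)]
      rw [hs, hl]
      simp only [Bool.false_eq_true, if_false, if_pos trivial, if_true, mul_one]
      ring

end Aux


section Main

variable {F : Type*} [Field F] [CharP F 2]
variable {Γ : Type*} [AddCommGroup Γ] [LinearOrder Γ] [IsOrderedAddMonoid Γ]
variable {ν : F → Γ}

lemma snoc_mask_sum (n : ℕ) (β : Fin (n + 2) → F) (ν : F → Γ) (i' : Fin (n + 1) → Bool) (b : Bool) :
    (∑ j : Fin (n + 2), if (Fin.snoc i' b : Fin (n+2) → Bool) j = true then ν (β j) else 0) =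
      (∑ j : Fin (n + 1), if i' j = true then ν (β j.castSucc) else 0) +
        (if b = true then ν (β (Fin.last (n + 1))) else 0) := by
  rw [Fin.sum_univ_castSucc]
  simp [Fin.snoc_castSucc, Fin.snoc_last]

lemma pfister_main
    (hmul : ∀ x y : F, x ≠ 0 → y ≠ 0 → ν (x * y) = ν x + ν y)
    (hadd : ∀ x y : F, x ≠ 0 → y ≠ 0 → x + y ≠ 0 → min (ν x) (ν y) ≤ ν (x + y)) :
    ∀ (m : ℕ) (β : Fin (m + 1) → F), (∀ i, β i ≠ 0) → ν (β 0) < 0 →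
    (∀ A : Finset (Fin (m + 1)),
      (∑ i ∈ A, QuotientAddGroup.mk' (twoSubgroup Γ) (ν (β i))) = 0 → A = ∅) →
    ∀ w : (Fin (m + 1) → Bool) → F, w ≠ 0 →
    ∃ i : Fin (m + 1) → Bool, w i ≠ 0 ∧ pfisterFun m β w ≠ 0 ∧
      ν (pfisterFun m β w) =
        ν (w i) + ν (w i) + ∑ j, (if i j = true then ν (β j) else 0) := by
  intro m
  induction m with
  | zero =>
    intro β hβ0 hneg hind w hw
    set cf : Fin 1 → Bool := fun _ => false with hcf_def
    set ct : Fin 1 → Bool := fun _ => true with hct_def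
    have hidx : ∀ i : Fin 1 → Bool, i = cf ∨ i = ct := by
      intro i
      cases h : i 0 with
      | false => left; funext t; rw [Subsingleton.elim t 0, h]
      | true => right; funext t; rw [Subsingleton.elim t 0, h]
    have hor : w cf ≠ 0 ∨ w ct ≠ 0 := by
      obtain ⟨i, hi⟩ := Function.ne_iff.mp hw
      rcases hidx i with h | h
      · left; rwa [← h]
      · right; rwa [← h]
    have hsumcf : (∑ j : Fin 1, if cf j = true then ν (β j) else 0) = 0 := by
      simp [hcf_def]
    have hsumct : (∑ j : Fin 1, if ct j = true then ν (β j) else 0) = ν (β 0) := by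
      simp [hct_def]
    have hφ : pfisterFun 0 β w = w cf ^ 2 + w cf * w ct + β 0 * w ct ^ 2 := rfl
    by_cases h1 : w ct = 0
    · have h0 : w cf ≠ 0 := by tauto
      have hval : pfisterFun 0 β w = w cf ^ 2 := by rw [hφ, h1]; ring
      refine ⟨cf, h0, ?_, ?_⟩
      · rw [hval]; exact pow_ne_zero _ h0
      · rw [hval, hsumcf, add_zero, sq, hmul _ _ h0 h0]
    by_cases h2 : w cf = 0
    · have hval : pfisterFun 0 β w = β 0 * w ct ^ 2 := by rw [hφ, h2]; ring
      refine ⟨ct, h1, ?_, ?_⟩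
      · rw [hval]; exact mul_ne_zero (hβ0 0) (pow_ne_zero _ h1)
      · rw [hval, hsumct, hmul _ _ (hβ0 0) (pow_ne_zero _ h1), sq, hmul _ _ h1 h1]
        abel
    -- both nonzero
    set a := ν (w cf) with ha
    set b := ν (w ct) with hb
    have hne2 : a + a ≠ ν (β 0) + (b + b) := by
      intro h
      have hmem : ν (β 0) = (a - b) + (a - b) := by
        have : ν (β 0) = a + a - (b + b) := by
          rw [h]; abel
        rw [this]; abel
      have hz : QuotientAddGroup.mk' (twoSubgroup Γ) (ν (β 0)) = 0 := by
        rw [hmem]; exact aux_two_tor _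
      have := hind {0} (by rw [Finset.sum_singleton]; exact hz)
      exact Finset.singleton_ne_empty 0 this
    have ht1 : w cf ^ 2 ≠ 0 := pow_ne_zero _ h2
    have ht2 : w cf * w ct ≠ 0 := mul_ne_zero h2 h1
    have ht3 : β 0 * w ct ^ 2 ≠ 0 := mul_ne_zero (hβ0 0) (pow_ne_zero _ h1)
    have hv1 : ν (w cf ^ 2) = a + a := by rw [sq, hmul _ _ h2 h2]
    have hv2 : ν (w cf * w ct) = a + b := hmul _ _ h2 h1
    have hv3 : ν (β 0 * w ct ^ 2) = ν (β 0) + (b + b) := by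
      rw [hmul _ _ (hβ0 0) (pow_ne_zero _ h1), sq, hmul _ _ h1 h1]
    rcases hne2.lt_or_gt with hlt | hgt
    · -- first term dominates
      have hab : a < b := by
        have h3 : a + a < b + b := lt_of_lt_of_le hlt
          (by calc ν (β 0) + (b + b) ≤ 0 + (b + b) := add_le_add_left hneg.le _
              _ = b + b := zero_add _)
        by_contra hc
        push_neg at hc
        exact absurd (add_le_add hc hc) (not_le.mpr h3)
      have hmin2 : a + a < a + b := add_lt_add_right hab a
      set r := w cf * w ct + β 0 * w ct ^ 2 with hr_def
      have hφ2 : pfisterFun 0 β w = w cf ^ 2 + r := by rw [hφ, hr_def]; ring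
      by_cases hr : r = 0
      · refine ⟨cf, h2, ?_, ?_⟩
        · rw [hφ2, hr, add_zero]; exact ht1
        · rw [hφ2, hr, add_zero, hv1, hsumcf, add_zero]
      · have hrv : a + a < ν r := by
          have := hadd _ _ ht2 ht3 hr
          calc a + a < min (ν (w cf * w ct)) (ν (β 0 * w ct ^ 2)) := by
                rw [hv2, hv3]; exact lt_min hmin2 hlt
            _ ≤ ν r := this
        obtain ⟨hz, he⟩ := aux_add_lt hadd ht1 hr (by rw [hv1]; exact hrv)
        refine ⟨cf, h2, ?_, ?_⟩
        · rw [hφ2]; exact hz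
        · rw [hφ2, he, hv1, hsumcf, add_zero]
    · -- third term dominates
      have hmin2 : ν (β 0) + (b + b) < a + b := by
        rcases le_or_gt b a with h | h
        · calc ν (β 0) + (b + b) < 0 + (a + b) :=
                add_lt_add_of_lt_of_le hneg (add_le_add_left h b)
            _ = a + b := zero_add _
        · calc ν (β 0) + (b + b) < a + a := hgt
            _ < a + b := add_lt_add_right h a
      set l := w cf ^ 2 + w cf * w ct with hl_def
      have hφ2 : pfisterFun 0 β w = l + β 0 * w ct ^ 2 := by rw [hφ, hl_def]
      by_cases hl : l = 0
      · refine ⟨ct, h1, ?_, ?_⟩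
        · rw [hφ2, hl, zero_add]; exact ht3
        · rw [hφ2, hl, zero_add, hv3, hsumct]; abel
      · have hlv : ν (β 0 * w ct ^ 2) < ν l := by
          have := hadd _ _ ht1 ht2 hl
          calc ν (β 0 * w ct ^ 2) < min (ν (w cf ^ 2)) (ν (w cf * w ct)) := by
                rw [hv1, hv2, hv3]; exact lt_min hgt hmin2
            _ ≤ ν l := this
        obtain ⟨hz, he⟩ := aux_add_lt hadd ht3 hl hlv
        rw [add_comm] at hz he
        refine ⟨ct, h1, ?_, ?_⟩
        · rw [hφ2]; exact hz
        · rw [hφ2, he, hv3, hsumct]; abel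
  | succ n ih =>
    intro β hβ0 hneg hind w hw
    set β' : Fin (n + 1) → F := fun t => β t.castSucc with hβ'_def
    have hβ'0 : ∀ i, β' i ≠ 0 := fun i => hβ0 _
    have hβ'neg : ν (β' 0) < 0 := by
      have : β' 0 = β 0 := by
        rw [hβ'_def]
        norm_num
      rwa [this]
    have hind' : ∀ A : Finset (Fin (n + 1)),
        (∑ i ∈ A, QuotientAddGroup.mk' (twoSubgroup Γ) (ν (β' i))) = 0 → A = ∅ := by
      intro A hA
      have := hind (A.map ⟨Fin.castSucc, Fin.castSucc_injective _⟩)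
        (by rw [Finset.sum_map]; exact hA)
      rwa [Finset.map_eq_empty] at this
    set W0 : (Fin (n + 1) → Bool) → F := fun t => w (Fin.snoc t false) with hW0_def
    set W1 : (Fin (n + 1) → Bool) → F := fun t => w (Fin.snoc t true) with hW1_def
    have hφ : pfisterFun (n + 1) β w = pfisterFun n β' W0 + β (Fin.last (n + 1)) * pfisterFun n β' W1 := rfl
    have hWsplit : ∀ i : Fin (n + 2) → Bool, w i ≠ 0 →
        (i (Fin.last (n + 1)) = false ∧ W0 (Fin.init i) ≠ 0) ∨
        (i (Fin.last (n + 1)) = true ∧ W1 (Fin.init i) ≠ 0) := by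
      intro i hi
      cases h : i (Fin.last (n + 1)) with
      | false =>
        left
        refine ⟨rfl, ?_⟩
        have : Fin.snoc (Fin.init i) false = i := by
          conv_rhs => rw [← Fin.snoc_init_self i]; rw [h]
        rw [hW0_def]
        simpa [this] using hi
      | true =>
        right
        refine ⟨rfl, ?_⟩
        have : Fin.snoc (Fin.init i) true = i := by
          conv_rhs => rw [← Fin.snoc_init_self i]; rw [h]
        rw [hW1_def]
        simpa [this] using hi
    have hWor : W0 ≠ 0 ∨ W1 ≠ 0 := by
      obtain ⟨i, hi⟩ := Function.ne_iff.mp hw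
      rcases hWsplit i hi with ⟨_, h⟩ | ⟨_, h⟩
      · left; exact Function.ne_iff.mpr ⟨_, h⟩
      · right; exact Function.ne_iff.mpr ⟨_, h⟩
    by_cases hW1 : W1 = 0
    · have hW0 : W0 ≠ 0 := by tauto
      have hz1 : pfisterFun n β' W1 = 0 :=
        pfister_eval_zero n β' W1 (fun t => by rw [hW1]; rfl)
      have hφ2 : pfisterFun (n + 1) β w = pfisterFun n β' W0 := by
        rw [hφ, hz1, mul_zero, add_zero]
      obtain ⟨i0, hi0, hnz, hval⟩ := ih β' hβ'0 hβ'neg hind' W0 hW0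
      refine ⟨Fin.snoc i0 false, hi0, ?_, ?_⟩
      · rw [hφ2]; exact hnz
      · rw [hφ2, hval, snoc_mask_sum n β ν i0 false]
        simp [hβ'_def, hW0_def]
    by_cases hW0 : W0 = 0
    · have hz0 : pfisterFun n β' W0 = 0 :=
        pfister_eval_zero n β' W0 (fun t => by rw [hW0]; rfl)
      have hφ2 : pfisterFun (n + 1) β w = β (Fin.last (n + 1)) * pfisterFun n β' W1 := by
        rw [hφ, hz0, zero_add]
      obtain ⟨i1, hi1, hnz, hval⟩ := ih β' hβ'0 hβ'neg hind' W1 hW1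
      refine ⟨Fin.snoc i1 true, hi1, ?_, ?_⟩
      · rw [hφ2]; exact mul_ne_zero (hβ0 _) hnz
      · rw [hφ2, hmul _ _ (hβ0 _) hnz, hval, snoc_mask_sum n β ν i1 true]
        simp only [if_pos rfl, hβ'_def, hW1_def]
        rw [add_left_comm]; exact congrArg (_ + ·) (add_comm _ _)
    -- both parts nonzero
    obtain ⟨i0, hi0, hnz0, hval0⟩ := ih β' hβ'0 hβ'neg hind' W0 hW0
    obtain ⟨i1, hi1, hnz1, hval1⟩ := ih β' hβ'0 hβ'neg hind' W1 hW1
    set x := pfisterFun n β' W0 with hx_def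
    set y := β (Fin.last (n + 1)) * pfisterFun n β' W1 with hy_def
    have hynz : y ≠ 0 := mul_ne_zero (hβ0 _) hnz1
    have hvy : ν y = ν (β (Fin.last (n + 1))) +
        (ν (W1 i1) + ν (W1 i1) + ∑ j, (if i1 j = true then ν (β' j) else 0)) := by
      rw [hy_def, hmul _ _ (hβ0 _) hnz1, hval1]
    have hne : ν x ≠ ν y := by
      intro heq
      set q := QuotientAddGroup.mk' (twoSubgroup Γ) with hq_def
      have qtor : ∀ v : Γ, q v + q v = 0 := fun v => by
        rw [← map_add]; exact aux_two_tor v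
      have gtor : ∀ u : Γ ⧸ twoSubgroup Γ, u + u = 0 := by
        intro u
        obtain ⟨v, rfl⟩ := QuotientAddGroup.mk'_surjective (twoSubgroup Γ) u
        exact qtor v
      set S0 := ∑ j, (if i0 j = true then ν (β' j) else 0) with hS0_def
      set S1 := ∑ j, (if i1 j = true then ν (β' j) else 0) with hS1_def
      set g : Fin (n + 1) → Γ ⧸ twoSubgroup Γ := fun j => q (ν (β' j)) with hg_def
      have hqsum : ∀ (i : Fin (n + 1) → Bool),
          q (∑ j, (if i j = true then ν (β' j) else 0)) =
            ∑ j, (if i j = true then g j else 0) := by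
        intro i
        rw [map_sum]
        refine Finset.sum_congr rfl fun j _ => ?_
        rw [apply_ite q, map_zero]
      have E := heq
      rw [hval0, hvy] at E
      have hL : ν (β (Fin.last (n + 1))) =
          (ν (W0 i0) + ν (W0 i0) + S0) - (ν (W1 i1) + ν (W1 i1) + S1) :=
        eq_sub_of_add_eq E.symm
      have hqL : q (ν (β (Fin.last (n + 1)))) = q S0 + q S1 := by
        rw [hL]
        simp only [map_sub, map_add]
        rw [qtor (ν (W0 i0)), qtor (ν (W1 i1)), zero_add, zero_add, sub_eq_add_neg,
          neg_eq_of_add_eq_zero_left (qtor S1)]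
      have hD : q S0 + q S1 =
          ∑ j ∈ Finset.univ.filter (fun j => ¬ (i0 j = i1 j)), g j := by
        rw [hS0_def, hS1_def, hqsum, hqsum, ← Finset.sum_add_distrib, Finset.sum_filter]
        refine Finset.sum_congr rfl fun j _ => ?_
        cases h0 : i0 j <;> cases h1 : i1 j <;> simp [gtor]
      have hzero : q (ν (β (Fin.last (n + 1)))) +
          ∑ j ∈ Finset.univ.filter (fun j => ¬ (i0 j = i1 j)), g j = 0 := by
        rw [← hD, hqL]
        exact gtor _
      set D := Finset.univ.filter (fun j => ¬ (i0 j = i1 j)) with hD_def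
      set A : Finset (Fin (n + 2)) :=
        insert (Fin.last (n + 1)) (D.map ⟨Fin.castSucc, Fin.castSucc_injective _⟩) with hA_def
      have hlast_notmem : Fin.last (n + 1) ∉ D.map ⟨Fin.castSucc, Fin.castSucc_injective _⟩ := by
        simp only [Finset.mem_map, Function.Embedding.coeFn_mk]
        rintro ⟨j, -, hj⟩
        exact (Fin.castSucc_lt_last j).ne hj
      have hAsum : (∑ i ∈ A, q (ν (β i))) = 0 := by
        rw [hA_def, Finset.sum_insert hlast_notmem, Finset.sum_map]
        simpa [hg_def, hβ'_def] using hzero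
      have hAempty := hind A hAsum
      rw [hA_def] at hAempty
      exact (Finset.insert_ne_empty _ _) hAempty
    obtain ⟨hznz, hzval⟩ := aux_add_ne hadd hnz0 hynz hne
    rcases hne.lt_or_gt with hlt | hgt
    · refine ⟨Fin.snoc i0 false, hi0, ?_, ?_⟩
      · rw [hφ]; exact hznz
      · rw [hφ, hzval, min_eq_left hlt.le, hval0, snoc_mask_sum n β ν i0 false]
        simp [hβ'_def, hW0_def]
    · refine ⟨Fin.snoc i1 true, hi1, ?_, ?_⟩
      · rw [hφ]; exact hznz
      · rw [hφ, hzval, min_eq_right hgt.le, hvy, snoc_mask_sum n β ν i1 true]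
        simp only [if_pos rfl, hβ'_def, hW1_def]
        rw [add_left_comm]; exact congrArg (_ + ·) (add_comm _ _)

end Main


section Final

variable {F : Type*} [Field F] [CharP F 2]
variable {Γ : Type*} [AddCommGroup Γ] [LinearOrder Γ] [IsOrderedAddMonoid Γ]
variable {ν : F → Γ}

lemma aux_monomial_val (hmul : ∀ x y : F, x ≠ 0 → y ≠ 0 → ν (x * y) = ν x + ν y)
    (m : ℕ) (β : Fin (m + 1) → F) (hβ0 : ∀ i, β i ≠ 0) (i : Fin (m + 1) → Bool)
    (c : F) (hc : c ≠ 0) :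
    pfisterFun m β (fun j => if j = i then c else 0) ≠ 0 ∧
      ν (pfisterFun m β (fun j => if j = i then c else 0)) =
        ν c + ν c + ∑ j, (if i j = true then ν (β j) else 0) := by
  have hg : ∀ j ∈ (Finset.univ : Finset (Fin (m + 1))),
      (if i j = true then β j else 1) ≠ 0 := by
    intro j _
    split_ifs
    · exact hβ0 j
    · exact one_ne_zero
  obtain ⟨hP, hPv⟩ := aux_prod_nu hmul Finset.univ (fun j => if i j = true then β j else 1) hg
  have hsum : (∑ j, ν (if i j = true then β j else 1)) =
      ∑ j, (if i j = true then ν (β j) else 0) := by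
    refine Finset.sum_congr rfl fun j _ => ?_
    rw [apply_ite ν, aux_nu_one hmul]
  rw [pfister_monomial]
  refine ⟨mul_ne_zero (pow_ne_zero _ hc) hP, ?_⟩
  rw [hmul _ _ (pow_ne_zero _ hc) hP, hPv, hsum, sq, hmul _ _ hc hc]

theorem pfister_valuation_monomial_values' {F : Type*} [Field F] [CharP F 2]
    {Γ : Type*} [AddCommGroup Γ] [LinearOrder Γ] [IsOrderedAddMonoid Γ]
    (ν : F → Γ)
    (hmul : ∀ x y : F, x ≠ 0 → y ≠ 0 → ν (x * y) = ν x + ν y)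
    (hadd : ∀ x y : F, x ≠ 0 → y ≠ 0 → x + y ≠ 0 → min (ν x) (ν y) ≤ ν (x + y))
    (m : ℕ) (β : Fin (m + 1) → F) (hβ0 : ∀ i, β i ≠ 0)
    (hneg : ν (β 0) < 0)
    (hind : ∀ A : Finset (Fin (m + 1)),
      (∑ i ∈ A, QuotientAddGroup.mk' (twoSubgroup Γ) (ν (β i))) = 0 → A = ∅) :
    (∀ w : (Fin (m + 1) → Bool) → F, w ≠ 0 → ∃ i : Fin (m + 1) → Bool, w i ≠ 0 ∧
        ν (pfisterFun m β w) =
          ν (pfisterFun m β (fun j => if j = i then w i else 0))) ∧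
    (∀ w : (Fin (m + 1) → Bool) → F, w ≠ 0 → pfisterFun m β w ≠ 0) ∧
    {c : Γ ⧸ twoSubgroup Γ | ∃ w : (Fin (m + 1) → Bool) → F,
        pfisterFun m β w ≠ 0 ∧ c = QuotientAddGroup.mk' (twoSubgroup Γ) (ν (pfisterFun m β w))} =
      (AddSubgroup.closure
        (Set.range fun i : Fin (m + 1) => QuotientAddGroup.mk' (twoSubgroup Γ) (ν (β i))) :
          Set (Γ ⧸ twoSubgroup Γ)) := by
  set q := QuotientAddGroup.mk' (twoSubgroup Γ) with hq_def
  have qtor : ∀ v : Γ, q v + q v = 0 := fun v => by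
    rw [← map_add]; exact aux_two_tor v
  have gtor : ∀ u : Γ ⧸ twoSubgroup Γ, u + u = 0 := by
    intro u
    obtain ⟨v, rfl⟩ := QuotientAddGroup.mk'_surjective (twoSubgroup Γ) u
    exact qtor v
  refine ⟨?_, ?_, ?_⟩
  · intro w hw
    obtain ⟨i, hi, hnz, hval⟩ := pfister_main hmul hadd m β hβ0 hneg hind w hw
    obtain ⟨hm, hmv⟩ := aux_monomial_val hmul m β hβ0 i (w i) hi
    exact ⟨i, hi, by rw [hval, hmv]⟩
  · intro w hw
    obtain ⟨i, hi, hnz, hval⟩ := pfister_main hmul hadd m β hβ0 hneg hind w hw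
    exact hnz
  · ext c
    simp only [Set.mem_setOf_eq, SetLike.mem_coe]
    constructor
    · rintro ⟨w, hφ, rfl⟩
      have hw : w ≠ 0 := by
        intro h
        exact hφ (by rw [h]; exact pfister_eval_zero m β 0 (fun t => rfl))
      obtain ⟨i, hi, hnz, hval⟩ := pfister_main hmul hadd m β hβ0 hneg hind w hw
      rw [hval, map_add, map_add, qtor, zero_add, map_sum]
      refine AddSubgroup.sum_mem _ fun j _ => ?_
      rw [apply_ite q, map_zero]
      split_ifs
      · exact AddSubgroup.subset_closure ⟨j, rfl⟩
      · exact zero_mem _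
    · intro hc
      have hform : ∃ i : Fin (m + 1) → Bool,
          c = ∑ j, (if i j = true then q (ν (β j)) else 0) := by
        refine AddSubgroup.closure_induction ?_ ?_ ?_ ?_ hc
        · rintro x ⟨j, rfl⟩
          refine ⟨fun t => decide (t = j), ?_⟩
          rw [show (∑ t, if (decide (t = j) : Bool) = true then q (ν (β t)) else 0) =
              ∑ t, if t = j then q (ν (β t)) else 0 from
            Finset.sum_congr rfl fun t _ => by simp, Finset.sum_ite_eq' Finset.univ j]
          simp
        · exact ⟨fun _ => false, by simp⟩
        · rintro x y - - ⟨i0, rfl⟩ ⟨i1, rfl⟩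
          refine ⟨fun t => xor (i0 t) (i1 t), ?_⟩
          rw [← Finset.sum_add_distrib]
          refine Finset.sum_congr rfl fun j _ => ?_
          cases h0 : i0 j <;> cases h1 : i1 j <;> simp [h0, h1, gtor]
        · rintro x - ⟨i, rfl⟩
          refine ⟨i, ?_⟩
          refine neg_eq_of_add_eq_zero_left ?_
          rw [← Finset.sum_add_distrib]
          refine Finset.sum_eq_zero fun j _ => ?_
          cases h : i j <;> simp [gtor]
      obtain ⟨i, rfl⟩ := hform
      obtain ⟨hm, hmv⟩ := aux_monomial_val hmul m β hβ0 i 1 one_ne_zero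
      refine ⟨fun j => if j = i then 1 else 0, hm, ?_⟩
      rw [hmv, aux_nu_one hmul, map_add, map_add, map_zero, zero_add, zero_add, map_sum]
      refine Finset.sum_congr rfl fun j _ => ?_
      rw [apply_ite q, map_zero]

end Final

/-- Lemma 9.1: let `F` be a field of characteristic 2 with a valuation
`ν : F^× → Γ` to a totally ordered abelian group `Γ`.  Fix `k = m + 1 ≥ 1` and
`β₁,…,β_k ∈ F^×` (here `β i = β_{i+1}`) with `ν(β₁) < 0` and the images of
`ν(β₁),…,ν(β_k)` in `Γ/2Γ` linearly independent over `𝔽₂`.  Let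
`φ = ⟪β_k,…,β₂,β₁]]` on the space `W` with its monomial basis.  Then:
(1) for every nonzero `w ∈ W` there is an index `𝐢` with `w_𝐢 ≠ 0` and
`ν(φ(w)) = ν(φ(w_𝐢 e_𝐢))`; (2) `φ` is anisotropic; (3) the set of classes mod `2Γ` of
the nonzero values of `φ` is exactly the `𝔽₂`-subspace of `Γ/2Γ` spanned by the
`ν(βᵢ)`. -/
theorem pfister_valuation_monomial_values {F : Type*} [Field F] [CharP F 2]
    {Γ : Type*} [AddCommGroup Γ] [LinearOrder Γ] [IsOrderedAddMonoid Γ]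
    (ν : F → Γ)
    (hmul : ∀ x y : F, x ≠ 0 → y ≠ 0 → ν (x * y) = ν x + ν y)
    (hadd : ∀ x y : F, x ≠ 0 → y ≠ 0 → x + y ≠ 0 → min (ν x) (ν y) ≤ ν (x + y))
    (m : ℕ) (β : Fin (m + 1) → F) (hβ0 : ∀ i, β i ≠ 0)
    (hneg : ν (β 0) < 0)
    (hind : ∀ A : Finset (Fin (m + 1)),
      (∑ i ∈ A, QuotientAddGroup.mk' (twoSubgroup Γ) (ν (β i))) = 0 → A = ∅) :
    (∀ w : (Fin (m + 1) → Bool) → F, w ≠ 0 → ∃ i : Fin (m + 1) → Bool, w i ≠ 0 ∧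
        ν (pfisterFun m β w) =
          ν (pfisterFun m β (fun j => if j = i then w i else 0))) ∧
    (∀ w : (Fin (m + 1) → Bool) → F, w ≠ 0 → pfisterFun m β w ≠ 0) ∧
    {c : Γ ⧸ twoSubgroup Γ | ∃ w : (Fin (m + 1) → Bool) → F,
        pfisterFun m β w ≠ 0 ∧ c = QuotientAddGroup.mk' (twoSubgroup Γ) (ν (pfisterFun m β w))} =
      (AddSubgroup.closure
        (Set.range fun i : Fin (m + 1) => QuotientAddGroup.mk' (twoSubgroup Γ) (ν (β i))) :
          Set (Γ ⧸ twoSubgroup Γ)) := by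
  exact pfister_valuation_monomial_values' ν hmul hadd m β hβ0 hneg hind
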